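/- Let V be a real inner product space of dimension m ≥ 3 with orthonormal basis e₁, …, e_m, and let Ric and Ric′ be symmetric linear operators on V with Ric eᵢ = λᵢ·eᵢ and Ric′ eᵢ = λᵢ′·eᵢ for all i. Let s = Σᵢ λᵢ and s′ = Σᵢ λᵢ′, and let Riem and Riem′ be the conformally flat curvature forms determined by (Ric, s) and (Ric′, s′) respectively. If the C(m,2) M-eigenvalues agree, i.e. ((m−1)(λᵢ + λⱼ) + s)/((m−2)(m−1)) = ((m−1)(λᵢ′ + λⱼ′) + s′)/((m−2)(m−1)) for all i ≠ j, then Riem = Riem′. (The Riemann curvature tensor of a conformally flat manifold is determined by its C(m,2) M-eigenvalues.) -/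

import Mathlib

open scoped RealInnerProductSpace

/-- The conformally flat curvature form is determined by its `C(m,2)` M-eigenvalues:
if two conformally flat curvature forms, built from Ricci operators diagonalized by a
common orthonormal basis, have the same M-eigenvalues
`((m-1)(λᵢ+λⱼ)+s)/((m-2)(m-1))` for all `i ≠ j`, then the forms coincide. -/
theorem conformally_flat_determined_by_meigenvalues
    {V : Type*} [NormedAddCommGroup V] [InnerProductSpace ℝ V]
    (m : ℕ) (hm : 3 ≤ m)
    (b : OrthonormalBasis (Fin m) ℝ V)
    (Ric Ric' : V →ₗ[ℝ] V)
    (hRicSym : ∀ u v : V, ⟪Ric u, v⟫ = ⟪u, Ric v⟫)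
    (hRic'Sym : ∀ u v : V, ⟪Ric' u, v⟫ = ⟪u, Ric' v⟫)
    (lam lam' : Fin m → ℝ)
    (hRic : ∀ i, Ric (b i) = lam i • b i)
    (hRic' : ∀ i, Ric' (b i) = lam' i • b i)
    (s s' : ℝ) (hs : s = ∑ i, lam i) (hs' : s' = ∑ i, lam' i)
    (Riem Riem' : V → V → V → V → ℝ)
    (hRiem : ∀ u v z w : V, Riem u v z w =
      (1 / ((m : ℝ) - 2)) *
        (⟪u, z⟫ * ⟪Ric v, w⟫ - ⟪u, w⟫ * ⟪Ric v, z⟫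
          + ⟪v, w⟫ * ⟪Ric u, z⟫ - ⟪v, z⟫ * ⟪Ric u, w⟫)
      + (s / (((m : ℝ) - 1) * ((m : ℝ) - 2))) *
        (⟪u, z⟫ * ⟪v, w⟫ - ⟪u, w⟫ * ⟪v, z⟫))
    (hRiem' : ∀ u v z w : V, Riem' u v z w =
      (1 / ((m : ℝ) - 2)) *
        (⟪u, z⟫ * ⟪Ric' v, w⟫ - ⟪u, w⟫ * ⟪Ric' v, z⟫
          + ⟪v, w⟫ * ⟪Ric' u, z⟫ - ⟪v, z⟫ * ⟪Ric' u, w⟫)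
      + (s' / (((m : ℝ) - 1) * ((m : ℝ) - 2))) *
        (⟪u, z⟫ * ⟪v, w⟫ - ⟪u, w⟫ * ⟪v, z⟫))
    (heigen : ∀ i j : Fin m, i ≠ j →
      (((m : ℝ) - 1) * (lam i + lam j) + s) / (((m : ℝ) - 2) * ((m : ℝ) - 1)) =
      (((m : ℝ) - 1) * (lam' i + lam' j) + s') / (((m : ℝ) - 2) * ((m : ℝ) - 1))) :
    ∀ u v z w : V, Riem u v z w = Riem' u v z w := by
  have hm3 : (3 : ℝ) ≤ (m : ℝ) := by exact_mod_cast hm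
  have hm1 : (m : ℝ) - 1 ≠ 0 := by linarith
  have hm2 : (m : ℝ) - 2 ≠ 0 := by linarith
  have hD : ((m : ℝ) - 2) * ((m : ℝ) - 1) ≠ 0 := mul_ne_zero hm2 hm1
  have key : ∀ i j : Fin m, i ≠ j →
      ((m : ℝ) - 1) * (lam i + lam j) + s = ((m : ℝ) - 1) * (lam' i + lam' j) + s' := by
    intro i j hij
    have h := heigen i j hij
    rw [div_eq_div_iff hD hD] at h
    exact mul_right_cancel₀ hD h
  have hex : ∀ i j : Fin m, ∃ k : Fin m, k ≠ i ∧ k ≠ j := by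
    intro i j
    have hcard : ({i, j} : Finset (Fin m)).card < Fintype.card (Fin m) := by
      have h2 : ({i, j} : Finset (Fin m)).card ≤ 2 :=
        le_trans (Finset.card_insert_le _ _) (by simp)
      have : Fintype.card (Fin m) = m := Fintype.card_fin m
      omega
    have hss : ({i, j} : Finset (Fin m)) ⊂ Finset.univ := by
      rw [Finset.ssubset_univ_iff]
      intro h; rw [h] at hcard; simp [Finset.card_univ] at hcard
    obtain ⟨k, _, hk⟩ := Finset.exists_of_ssubset hss
    simp only [Finset.mem_insert, Finset.mem_singleton, not_or] at hk
    exact ⟨k, hk.1, hk.2⟩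
  have hpair : ∀ i j : Fin m, i ≠ j →
      ((m : ℝ) - 1) * ((lam i - lam' i) + (lam j - lam' j)) = s' - s := by
    intro i j hij
    have := key i j hij
    ring_nf at this ⊢
    linarith
  have hd : ∀ i j : Fin m, lam i - lam' i = lam j - lam' j := by
    intro i j
    by_cases h : i = j
    · rw [h]
    · obtain ⟨k, hki, hkj⟩ := hex i j
      have h1 := hpair i k (fun e => hki e.symm)
      have h2 := hpair j k (fun e => hkj e.symm)
      have h3 : ((m : ℝ) - 1) * ((lam i - lam' i) + (lam k - lam' k)) =
          ((m : ℝ) - 1) * ((lam j - lam' j) + (lam k - lam' k)) := by linarith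
      have := mul_left_cancel₀ hm1 h3
      linarith
  set i0 : Fin m := ⟨0, by omega⟩ with hi0
  set i1 : Fin m := ⟨1, by omega⟩ with hi1
  have hi01 : i0 ≠ i1 := by simp [hi0, hi1, Fin.ext_iff]
  set a : ℝ := lam i0 - lam' i0 with ha
  have hsum : s - s' = (m : ℝ) * a := by
    rw [hs, hs', ← Finset.sum_sub_distrib]
    rw [Finset.sum_congr rfl (fun i _ => (hd i i0 : lam i - lam' i = a))]
    simp [Finset.card_univ, mul_comm]
    rw [ha]; ring
  have hpa := hpair i0 i1 hi01
  have hai1 : lam i1 - lam' i1 = a := hd i1 i0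
  have ha0 : a = 0 := by
    rw [hai1] at hpa
    -- (m-1)*(2a) = s' - s = -m a
    have : (3 * (m : ℝ) - 2) * a = 0 := by linear_combination hpa - hsum
    have h32 : (3 * (m : ℝ) - 2) ≠ 0 := by linarith
    exact (mul_eq_zero.mp this).resolve_left h32
  have hlam : lam = lam' := by
    funext i
    have := hd i i0
    rw [← ha, ha0] at this
    linarith
  have hss : s = s' := by rw [hs, hs', hlam]
  have hRR : Ric = Ric' := by
    apply b.toBasis.ext
    intro i
    simp only [OrthonormalBasis.coe_toBasis]
    rw [hRic, hRic', hlam]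
  intro u v z w
  rw [hRiem, hRiem', hRR, hss]
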